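/- Let ξ_n > 0 and η_n > 0 be sequences with ξ_n η_n → 0 and n^{1/2} η_n → ∞, and let k_n be integers with 1 ≤ k_n < n such that n − k_n is eventually constant equal to m. Suppose θ_n ∈ ℝ and σ_n ∈ (0,∞) satisfy θ_n/(σ_n ξ_n η_n) → ζ in the extended real line. For each n let Z_n have law N(θ_n, σ_n²ξ_n²/n), let S_n be independent of Z_n with density ρ_{n−k_n}, and let μ_n be the law of σ_n^{−1}(ξ_n η_n)^{−1}(θ̃_{H,n} − θ_n) where θ̃_{H,n} = Z_n·1(|Z_n| > σ_n S_n ξ_n η_n). Then: if ζ ∈ ℝ, μ_n converges weakly to (∫_{|ζ|}^∞ ρ_m(s) ds)·δ_{−ζ} + (1 − ∫_{|ζ|}^∞ ρ_m(s) ds)·δ_0; if |ζ| = ∞, μ_n converges weakly to δ_0. -/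

import Mathlib

open MeasureTheory ProbabilityTheory Filter Set

/-- Standard normal cdf. -/
noncomputable def Phi (x : ℝ) : ℝ :=
  ∫ t in Iic x, (Real.sqrt (2 * Real.pi))⁻¹ * Real.exp (-t ^ 2 / 2)

/-- Standard normal pdf. -/
noncomputable def stdPhi (t : ℝ) : ℝ :=
  (Real.sqrt (2 * Real.pi))⁻¹ * Real.exp (-t ^ 2 / 2)

/-- Extension of `Phi` to the extended reals, with `PhiE ⊤ = 1` and `PhiE ⊥ = 0`. -/
noncomputable def PhiE (z : EReal) : ℝ :=
  if z = ⊤ then 1 else if z = ⊥ then 0 else Phi z.toReal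

/-- Density of `m^{-1/2}` times the square root of a chi-square with `m` degrees of freedom. -/
noncomputable def rho (m : ℕ) (s : ℝ) : ℝ :=
  if 0 < s then
    (2 : ℝ) ^ ((1 : ℝ) - (m : ℝ) / 2) * (Real.Gamma ((m : ℝ) / 2))⁻¹ * Real.sqrt m *
      ((m : ℝ) * s ^ 2) ^ (((m : ℝ) - 1) / 2) * Real.exp (-(m : ℝ) * s ^ 2 / 2)
  else 0

/-- Joint law of the least-squares coordinate `Z ~ N(θ, σ²ξ²/n)` and the independent
variance-estimator ratio `S` with density `rho m`. -/
noncomputable def jointMeas (n m : ℕ) (ξ θ σ : ℝ) : Measure (ℝ × ℝ) :=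
  (gaussianReal θ (Real.toNNReal (σ ^ 2 * ξ ^ 2 / n))).prod
    (volume.withDensity fun s => ENNReal.ofReal (rho m s))

/-- Feasible hard-thresholding estimator `Z · 1(|Z| > σSξη)`. -/
noncomputable def hardF (σ ξ η : ℝ) (p : ℝ × ℝ) : ℝ :=
  if σ * p.2 * ξ * η < |p.1| then p.1 else 0

/-- Feasible soft-thresholding estimator `sign(Z)(|Z| − σSξη)₊`. -/
noncomputable def softF (σ ξ η : ℝ) (p : ℝ × ℝ) : ℝ :=
  Real.sign p.1 * max (|p.1| - σ * p.2 * ξ * η) 0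

/-- Feasible adaptive soft-thresholding estimator `Z(1 − σ²S²ξ²η²/Z²)₊`. -/
noncomputable def adaptF (σ ξ η : ℝ) (p : ℝ × ℝ) : ℝ :=
  if p.1 = 0 then 0 else p.1 * max (1 - (σ * p.2 * ξ * η) ^ 2 / p.1 ^ 2) 0

/-- Weak convergence of a sequence of Borel measures on `ℝ`: integrals of every bounded
continuous function converge. -/
def WeakConv (μ : ℕ → Measure ℝ) (ν : Measure ℝ) : Prop :=
  ∀ f : ℝ → ℝ, Continuous f → (∃ C : ℝ, ∀ x, |f x| ≤ C) →
    Tendsto (fun n => ∫ x, f x ∂(μ n)) atTop (nhds (∫ x, f x ∂ν))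

lemma rho_nonneg (m : ℕ) (s : ℝ) : 0 ≤ rho m s := by
  unfold rho
  split
  · positivity
  · exact le_refl 0

lemma rho_measurable (m : ℕ) : Measurable (rho m) := by
  unfold rho
  refine Measurable.ite (measurableSet_lt measurable_const measurable_id) ?_ measurable_const
  fun_prop

lemma rho_pos_eq (m : ℕ) (hm : 1 ≤ m) {s : ℝ} (hs : 0 < s) :
    rho m s = (2:ℝ)^((1:ℝ)-(m:ℝ)/2) * (Real.Gamma ((m:ℝ)/2))⁻¹ * (m:ℝ)^((m:ℝ)/2) *
      (s ^ ((m:ℝ)-1) * Real.exp (-((m:ℝ)/2) * s^2)) := by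
  have hm0 : (0:ℝ) < (m:ℝ) := by exact_mod_cast hm
  rw [rho, if_pos hs]
  have h1 : ((m:ℝ) * s ^ 2) ^ (((m:ℝ) - 1) / 2)
      = (m:ℝ) ^ (((m:ℝ) - 1) / 2) * s ^ ((m:ℝ) - 1) := by
    rw [Real.mul_rpow hm0.le (sq_nonneg s)]
    congr 1
    rw [← Real.rpow_natCast s 2, ← Real.rpow_mul hs.le]
    congr 1
    push_cast
    ring
  have h2 : Real.sqrt (m:ℝ) * (m:ℝ) ^ (((m:ℝ) - 1) / 2) = (m:ℝ) ^ ((m:ℝ)/2) := by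
    rw [Real.sqrt_eq_rpow, ← Real.rpow_add hm0]
    congr 1
    ring
  have h3 : -(m:ℝ) * s ^ 2 / 2 = -((m:ℝ)/2) * s^2 := by ring
  rw [h1, h3]
  rw [show (2:ℝ)^((1:ℝ)-(m:ℝ)/2) * (Real.Gamma ((m:ℝ)/2))⁻¹ * Real.sqrt (m:ℝ) *
      ((m:ℝ) ^ (((m:ℝ) - 1) / 2) * s ^ ((m:ℝ) - 1)) * Real.exp (-((m:ℝ)/2) * s^2)
    = (2:ℝ)^((1:ℝ)-(m:ℝ)/2) * (Real.Gamma ((m:ℝ)/2))⁻¹ *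
      (Real.sqrt (m:ℝ) * (m:ℝ) ^ (((m:ℝ) - 1) / 2)) *
      (s ^ ((m:ℝ)-1) * Real.exp (-((m:ℝ)/2) * s^2)) from by ring, h2]

lemma rho_integrableOn (m : ℕ) (hm : 1 ≤ m) : IntegrableOn (rho m) (Ioi 0) := by
  have hb : (0:ℝ) < (m:ℝ)/2 := by positivity
  have hs : (-1:ℝ) < (m:ℝ) - 1 := by
    have : (1:ℝ) ≤ (m:ℝ) := by exact_mod_cast hm
    linarith
  have h := (integrableOn_rpow_mul_exp_neg_mul_sq hb hs).const_mul
    ((2:ℝ)^((1:ℝ)-(m:ℝ)/2) * (Real.Gamma ((m:ℝ)/2))⁻¹ * (m:ℝ)^((m:ℝ)/2))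
  refine IntegrableOn.congr_fun h (fun x hx => ?_) measurableSet_Ioi
  rw [rho_pos_eq m hm hx]

lemma rho_eq_indicator (m : ℕ) : rho m = (Ioi (0:ℝ)).indicator (rho m) := by
  funext s
  by_cases h : 0 < s
  · simp [Set.indicator, h]
  · simp [Set.indicator, h, rho]

lemma rho_integrable (m : ℕ) (hm : 1 ≤ m) : Integrable (rho m) := by
  rw [rho_eq_indicator m]
  exact (integrable_indicator_iff measurableSet_Ioi).2 (rho_integrableOn m hm)

lemma rho_integral_Ioi (m : ℕ) (hm : 1 ≤ m) : ∫ s in Ioi (0:ℝ), rho m s = 1 := by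
  have hm0 : (0:ℝ) < (m:ℝ) := by exact_mod_cast hm
  have ha : (0:ℝ) < (m:ℝ)/2 := by positivity
  have hG : 0 < Real.Gamma ((m:ℝ)/2) := Real.Gamma_pos_of_pos ha
  set c : ℝ := (2:ℝ)^((1:ℝ)-(m:ℝ)/2) * (Real.Gamma ((m:ℝ)/2))⁻¹ * (m:ℝ)^((m:ℝ)/2) / 2 with hc
  set g : ℝ → ℝ := fun y => c * (y ^ ((m:ℝ)/2 - 1) * Real.exp (-((m:ℝ)/2 * y))) with hg
  have key : ∫ s in Ioi (0:ℝ), rho m s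
      = ∫ x in Ioi (0:ℝ), ((2:ℝ) * x ^ ((2:ℝ) - 1)) • g (x ^ (2:ℝ)) := by
    refine setIntegral_congr_fun measurableSet_Ioi (fun x hx => ?_)
    have hx : (0:ℝ) < x := hx
    rw [rho_pos_eq m hm hx, hg]
    have e1 : (x ^ (2:ℝ)) ^ ((m:ℝ)/2 - 1) = x ^ ((m:ℝ) - 2) := by
      rw [← Real.rpow_mul hx.le]
      congr 1
      ring
    have e2 : x ^ ((2:ℝ) - 1) = x := by
      norm_num
    have e3 : x * x ^ ((m:ℝ) - 2) = x ^ ((m:ℝ) - 1) := by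
      nth_rewrite 1 [← Real.rpow_one x]
      rw [← Real.rpow_add hx]
      congr 1
      ring
    have e4 : (-((m:ℝ)/2 * x ^ (2:ℝ))) = -((m:ℝ)/2) * x^2 := by
      rw [← Real.rpow_natCast x 2]
      push_cast
      ring
    simp only [smul_eq_mul, e1, e2, e4]
    rw [← e3]
    ring
  rw [key, integral_comp_rpow_Ioi_of_pos (by norm_num : (0:ℝ) < 2), hg]
  rw [integral_const_mul, Real.integral_rpow_mul_exp_neg_mul_Ioi ha ha]
  rw [hc]
  have hd : (1 / ((m:ℝ)/2)) ^ ((m:ℝ)/2) = (2:ℝ)^((m:ℝ)/2) / (m:ℝ)^((m:ℝ)/2) := by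
    rw [show (1:ℝ) / ((m:ℝ)/2) = 2 / (m:ℝ) by field_simp, Real.div_rpow (by norm_num) hm0.le]
  have h2two : (2:ℝ)^((1:ℝ)-(m:ℝ)/2) * (2:ℝ)^((m:ℝ)/2) = 2 := by
    rw [← Real.rpow_add (by norm_num : (0:ℝ)<2)]
    norm_num
  have hmne : (m:ℝ)^((m:ℝ)/2) ≠ 0 := by positivity
  rw [hd]
  field_simp
  ring_nf
  ring_nf at h2two
  linear_combination h2two

lemma rho_integral_total (m : ℕ) (hm : 1 ≤ m) : ∫ s, rho m s = 1 := by
  rw [rho_eq_indicator m, integral_indicator measurableSet_Ioi]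
  exact rho_integral_Ioi m hm

/-- The law with density `rho m`. -/
noncomputable def nuM (m : ℕ) : Measure ℝ :=
  volume.withDensity fun s => ENNReal.ofReal (rho m s)

lemma nuM_apply (m : ℕ) (hm : 1 ≤ m) {s : Set ℝ} (hs : MeasurableSet s) :
    nuM m s = ENNReal.ofReal (∫ x in s, rho m x) := by
  rw [nuM, withDensity_apply _ hs,
    ← ofReal_integral_eq_lintegral_ofReal ((rho_integrable m hm).integrableOn)
      (Filter.Eventually.of_forall fun x => rho_nonneg m x)]

lemma nuM_prob (m : ℕ) (hm : 1 ≤ m) : IsProbabilityMeasure (nuM m) := by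
  constructor
  rw [nuM_apply m hm MeasurableSet.univ, Measure.restrict_univ, rho_integral_total m hm,
    ENNReal.ofReal_one]

lemma nuM_singleton (m : ℕ) (L : ℝ) : nuM m {L} = 0 := by
  rw [nuM, withDensity_apply _ (measurableSet_singleton L),
    Measure.restrict_eq_zero.2 (Real.volume_singleton), lintegral_zero_measure]

lemma rho_setInt_nonneg (m : ℕ) (s : Set ℝ) : 0 ≤ ∫ x in s, rho m x :=
  setIntegral_nonneg_of_ae (Filter.Eventually.of_forall fun x => rho_nonneg m x)

lemma nuM_Ici (m : ℕ) (hm : 1 ≤ m) (L : ℝ) :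
    nuM m (Ici L) = ENNReal.ofReal (∫ x in Ioi L, rho m x) := by
  rw [nuM_apply m hm measurableSet_Ici, integral_Ici_eq_integral_Ioi]

lemma nuM_Iio (m : ℕ) (hm : 1 ≤ m) (L : ℝ) :
    nuM m (Iio L) = ENNReal.ofReal (1 - ∫ x in Ioi L, rho m x) := by
  have h := integral_add_compl (measurableSet_Iio (a := L)) (rho_integrable m hm) (f := rho m)
  rw [compl_Iio, integral_Ici_eq_integral_Ioi, rho_integral_total m hm] at h
  rw [nuM_apply m hm measurableSet_Iio, show (1:ℝ) - ∫ x in Ioi L, rho m x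
    = ∫ x in Iio L, rho m x from by linarith]

/-- The limiting description of the scaled feasible hard-threshold estimator. -/
noncomputable def hFun (c ε : ℝ) (q : ℝ × ℝ) : ℝ :=
  if q.2 < |c + ε * q.1| then ε * q.1 else -c

lemma hFun_measurable (c ε : ℝ) : Measurable (hFun c ε) := by
  unfold hFun
  exact Measurable.ite
    (measurableSet_lt measurable_snd ((measurable_fst.const_mul ε).const_add c).abs)
    (measurable_fst.const_mul ε) measurable_const

lemma hardF_measurable (σ ξ η : ℝ) : Measurable (hardF σ ξ η) := by
  unfold hardF
  exact Measurable.ite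
    (measurableSet_lt (((measurable_snd.const_mul σ).mul_const ξ).mul_const η)
      measurable_fst.abs) measurable_fst measurable_const

lemma hard_comp (σ ξ η θ : ℝ) (hσ : 0 < σ) (hξ : 0 < ξ) (hη : 0 < η) {sn : ℝ}
    (hsn : 0 < sn) (g s : ℝ) :
    σ⁻¹ * (ξ * η)⁻¹ * (hardF σ ξ η (θ + σ * ξ / sn * g, s) - θ)
      = hFun (θ / (σ * ξ * η)) ((sn * η)⁻¹) (g, s) := by
  have hd : (0:ℝ) < σ * ξ * η := by positivity
  have hiff : (σ * s * ξ * η < |θ + σ * ξ / sn * g|)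
      ↔ (s < |θ / (σ * ξ * η) + (sn * η)⁻¹ * g|) := by
    have he : θ / (σ * ξ * η) + (sn * η)⁻¹ * g = (θ + σ * ξ / sn * g) / (σ * ξ * η) := by
      field_simp
    rw [he, abs_div, abs_of_pos hd, lt_div_iff₀ hd,
      show s * (σ * ξ * η) = σ * s * ξ * η from by ring]
  unfold hardF hFun
  simp only
  by_cases hcond : σ * s * ξ * η < |θ + σ * ξ / sn * g|
  · rw [if_pos hcond, if_pos (hiff.1 hcond)]
    field_simp
    ring
  · rw [if_neg hcond, if_neg (fun h => hcond (hiff.2 h))]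
    field_simp
    ring

lemma gauss_shift (n : ℕ) (hn : 1 ≤ n) (σ ξ θ : ℝ) (hσ : 0 < σ) (hξ : 0 < ξ) :
    gaussianReal θ (Real.toNNReal (σ ^ 2 * ξ ^ 2 / n)) =
      Measure.map (fun g => θ + σ * ξ / Real.sqrt n * g) (gaussianReal 0 1) := by
  have hn0 : (0:ℝ) < Real.sqrt n := Real.sqrt_pos.2 (by exact_mod_cast hn)
  set a : ℝ := σ * ξ / Real.sqrt n with ha
  have hcomp : (fun g : ℝ => θ + a * g) = (fun x : ℝ => x + θ) ∘ (fun g : ℝ => a * g) := by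
    funext g
    simp [add_comm]
  rw [hcomp, ← Measure.map_map (measurable_add_const θ) (measurable_const_mul a)]
  rw [show (fun g : ℝ => a * g) = (a * ·) from rfl, gaussianReal_map_const_mul,
    gaussianReal_map_add_const]
  congr 1
  · ring
  · ext
    simp only [NNReal.coe_mul, NNReal.coe_mk, NNReal.coe_one, mul_one]
    rw [Real.coe_toNNReal _ (by positivity)]
    rw [ha, div_pow, Real.sq_sqrt (by positivity : (0:ℝ) ≤ (n:ℝ))]
    ring

lemma integrable_of_bound {α : Type*} [MeasurableSpace α] {μ : Measure α} [IsFiniteMeasure μ]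
    {f : α → ℝ} (hf : AEStronglyMeasurable f μ) (C : ℝ) (hfC : ∀ x, |f x| ≤ C) :
    Integrable f μ :=
  Integrable.mono' (integrable_const C) hf
    (Filter.Eventually.of_forall fun x => by rw [Real.norm_eq_abs]; exact hfC x)

lemma target_int (I : ℝ) (hI0 : 0 ≤ I) (hI1 : I ≤ 1) (z : ℝ) (f : ℝ → ℝ) (hf : Continuous f)
    (C : ℝ) (hfC : ∀ x, |f x| ≤ C) :
    ∫ x, f x ∂(ENNReal.ofReal I • Measure.dirac (-z) + ENNReal.ofReal (1 - I) • Measure.dirac 0)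
      = I * f (-z) + (1 - I) * f 0 := by
  haveI i1 : IsFiniteMeasure (ENNReal.ofReal I • Measure.dirac (-z)) :=
    Measure.smul_finite _ ENNReal.ofReal_ne_top
  haveI i2 : IsFiniteMeasure (ENNReal.ofReal (1 - I) • Measure.dirac (0:ℝ)) :=
    Measure.smul_finite _ ENNReal.ofReal_ne_top
  have hint1 : Integrable f (ENNReal.ofReal I • Measure.dirac (-z)) :=
    integrable_of_bound hf.aestronglyMeasurable C hfC
  have hint2 : Integrable f (ENNReal.ofReal (1 - I) • Measure.dirac (0:ℝ)) :=
    integrable_of_bound hf.aestronglyMeasurable C hfC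
  rw [integral_add_measure hint1 hint2, integral_smul_measure, integral_smul_measure,
    integral_dirac, integral_dirac, ENNReal.toReal_ofReal hI0,
    ENNReal.toReal_ofReal (by linarith : (0:ℝ) ≤ 1 - I), smul_eq_mul, smul_eq_mul]

lemma pointwise_conv_real {m : ℕ} (hm : 1 ≤ m) (c ε : ℕ → ℝ) (ζr : ℝ)
    (hc : Tendsto c atTop (nhds ζr)) (hε : Tendsto ε atTop (nhds 0))
    (f : ℝ → ℝ) (hf : Continuous f) {q : ℝ × ℝ} (hq : q.2 ≠ |ζr|) :
    Tendsto (fun n => f (hFun (c n) (ε n) q)) atTop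
      (nhds (f (if q.2 < |ζr| then 0 else -ζr))) := by
  have habs : Tendsto (fun n => |c n + ε n * q.1|) atTop (nhds |ζr|) := by
    have h0 : Tendsto (fun n => c n + ε n * q.1) atTop (nhds (ζr + 0 * q.1)) :=
      hc.add (hε.mul_const q.1)
    rw [zero_mul, add_zero] at h0
    exact (continuous_abs.tendsto _).comp h0
  rcases hq.lt_or_gt with h | h
  · have hev : ∀ᶠ n in atTop, q.2 < |c n + ε n * q.1| :=
      habs.eventually (eventually_gt_nhds h)
    have hlim : Tendsto (fun n => f (ε n * q.1)) atTop (nhds (f 0)) := by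
      have h0 : Tendsto (fun n => ε n * q.1) atTop (nhds (0 * q.1)) := hε.mul_const q.1
      rw [zero_mul] at h0
      exact (hf.tendsto 0).comp h0
    rw [if_pos h]
    refine hlim.congr' (hev.mono fun n hn => ?_)
    simp only [hFun]
    rw [if_pos hn]
  · have hev : ∀ᶠ n in atTop, ¬ q.2 < |c n + ε n * q.1| :=
      (habs.eventually (eventually_lt_nhds h)).mono fun n hn => not_lt.2 hn.le
    have hlim : Tendsto (fun n => f (-c n)) atTop (nhds (f (-ζr))) :=
      (hf.tendsto _).comp hc.neg
    rw [if_neg (not_lt.2 h.le)]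
    refine hlim.congr' (hev.mono fun n hn => ?_)
    simp only [hFun]
    rw [if_neg hn]

lemma pointwise_conv_inf (c ε : ℕ → ℝ)
    (hc : Tendsto (fun n => |c n|) atTop atTop) (hε : Tendsto ε atTop (nhds 0))
    (f : ℝ → ℝ) (hf : Continuous f) (q : ℝ × ℝ) :
    Tendsto (fun n => f (hFun (c n) (ε n) q)) atTop (nhds (f 0)) := by
  have hmul : Tendsto (fun n => ε n * q.1) atTop (nhds 0) := by
    have h0 : Tendsto (fun n => ε n * q.1) atTop (nhds (0 * q.1)) := hε.mul_const q.1
    rwa [zero_mul] at h0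
  have hsm : ∀ᶠ n in atTop, |ε n * q.1| < 1 := by
    have h0 := hmul.abs
    rw [abs_zero] at h0
    exact h0.eventually (eventually_lt_nhds one_pos)
  have habs : Tendsto (fun n => |c n + ε n * q.1|) atTop atTop := by
    refine tendsto_atTop_mono' atTop ?_ (tendsto_atTop_add_const_right _ (-1) hc)
    filter_upwards [hsm] with n hn
    have h1 : |c n| - |-(ε n * q.1)| ≤ |c n - -(ε n * q.1)| := abs_sub_abs_le_abs_sub _ _
    rw [abs_neg, sub_neg_eq_add] at h1
    have : |c n| + -1 ≤ |c n| - |ε n * q.1| := by linarith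
    linarith
  have hev : ∀ᶠ n in atTop, q.2 < |c n + ε n * q.1| := habs.eventually_gt_atTop q.2
  have hlim : Tendsto (fun n => f (ε n * q.1)) atTop (nhds (f 0)) := (hf.tendsto 0).comp hmul
  refine hlim.congr' (hev.mono fun n hn => ?_)
  simp only [hFun]
  rw [if_pos hn]

lemma rho_split (m : ℕ) (hm : 1 ≤ m) (L : ℝ) :
    ∫ x in Iio L, rho m x = 1 - ∫ x in Ioi L, rho m x := by
  have h := integral_add_compl (measurableSet_Iio (a := L)) (rho_integrable m hm) (f := rho m)
  rw [compl_Iio, integral_Ici_eq_integral_Ioi, rho_integral_total m hm] at h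
  linarith

lemma rho_Ioi_le_one (m : ℕ) (hm : 1 ≤ m) (L : ℝ) : ∫ x in Ioi L, rho m x ≤ 1 := by
  have h := rho_setInt_nonneg m (Iio L)
  rw [rho_split m hm L] at h
  linarith

lemma conv_real (m : ℕ) (hm : 1 ≤ m) (c ε : ℕ → ℝ) (ζr : ℝ)
    (hc : Tendsto c atTop (nhds ζr)) (hε : Tendsto ε atTop (nhds 0))
    (f : ℝ → ℝ) (hf : Continuous f) (C : ℝ) (hfC : ∀ x, |f x| ≤ C) :
    Tendsto (fun n => ∫ q, f (hFun (c n) (ε n) q) ∂((gaussianReal 0 1).prod (nuM m))) atTop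
      (nhds ((∫ s in Ioi |ζr|, rho m s) * f (-ζr)
        + (1 - ∫ s in Ioi |ζr|, rho m s) * f 0)) := by
  haveI := nuM_prob m hm
  set P := (gaussianReal 0 1).prod (nuM m) with hP
  haveI : IsProbabilityMeasure P := by rw [hP]; infer_instance
  set L := |ζr| with hL
  set g0 : ℝ → ℝ := fun s => if s < L then f 0 else f (-ζr) with hg0
  have hg0m : Measurable g0 :=
    Measurable.ite (measurableSet_lt measurable_id measurable_const)
      measurable_const measurable_const
  have hae : ∀ᵐ q ∂P, q.2 ≠ L := by
    rw [ae_iff]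
    have hset : {q : ℝ × ℝ | ¬ q.2 ≠ L} = Prod.snd ⁻¹' {L} := by
      ext q; simp [not_not]
    rw [hset, ← Measure.map_apply measurable_snd (measurableSet_singleton L),
      Measure.map_snd_prod]
    simp [measure_univ, nuM_singleton m L]
  have hDCT :
      Tendsto (fun n => ∫ q, f (hFun (c n) (ε n) q) ∂P) atTop
        (nhds (∫ q : ℝ × ℝ, g0 q.2 ∂P)) := by
    refine tendsto_integral_of_dominated_convergence (fun _ => C)
      (fun n => (hf.measurable.comp (hFun_measurable _ _)).aestronglyMeasurable)
      (integrable_const C)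
      (fun n => Filter.Eventually.of_forall fun q => by
        rw [Real.norm_eq_abs]; exact hfC _) ?_
    filter_upwards [hae] with q hq
    have := pointwise_conv_real hm c ε ζr hc hε f hf hq
    rw [show g0 q.2 = f (if q.2 < L then 0 else -ζr) from (apply_ite f _ _ _).symm]
    exact this
  have hval : (∫ q : ℝ × ℝ, g0 q.2 ∂P)
      = (∫ s in Ioi L, rho m s) * f (-ζr) + (1 - ∫ s in Ioi L, rho m s) * f 0 := by
    have h1 : (∫ q : ℝ × ℝ, g0 q.2 ∂P) = ∫ s, g0 s ∂(nuM m) := by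
      have h := integral_map (measurable_snd.aemeasurable (μ := P))
        hg0m.aestronglyMeasurable
      rw [Measure.map_snd_prod, measure_univ, one_smul] at h
      exact h.symm
    have h2 : g0 = fun s => f (-ζr) + (Iio L).indicator (fun _ => f 0 - f (-ζr)) s := by
      funext s
      by_cases h : s < L <;> simp [hg0, Set.indicator, h]
    rw [h1, h2, integral_add (integrable_const _)
      ((integrable_const _).indicator measurableSet_Iio),
      integral_indicator_const _ measurableSet_Iio, integral_const, probReal_univ,
      measureReal_def, nuM_Iio m hm L, ENNReal.toReal_ofReal (by linarith [rho_Ioi_le_one m hm L]),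
      one_smul, smul_eq_mul]
    ring
  convert hDCT using 2
  exact hval.symm

lemma conv_inf (m : ℕ) (hm : 1 ≤ m) (c ε : ℕ → ℝ)
    (hc : Tendsto (fun n => |c n|) atTop atTop) (hε : Tendsto ε atTop (nhds 0))
    (f : ℝ → ℝ) (hf : Continuous f) (C : ℝ) (hfC : ∀ x, |f x| ≤ C) :
    Tendsto (fun n => ∫ q, f (hFun (c n) (ε n) q) ∂((gaussianReal 0 1).prod (nuM m))) atTop
      (nhds (f 0)) := by
  haveI := nuM_prob m hm
  set P := (gaussianReal 0 1).prod (nuM m) with hP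
  haveI : IsProbabilityMeasure P := by rw [hP]; infer_instance
  have hDCT :
      Tendsto (fun n => ∫ q, f (hFun (c n) (ε n) q) ∂P) atTop
        (nhds (∫ _q : ℝ × ℝ, f 0 ∂P)) := by
    refine tendsto_integral_of_dominated_convergence (fun _ => C)
      (fun n => (hf.measurable.comp (hFun_measurable _ _)).aestronglyMeasurable)
      (integrable_const C)
      (fun n => Filter.Eventually.of_forall fun q => by
        rw [Real.norm_eq_abs]; exact hfC _) ?_
    exact Filter.Eventually.of_forall fun q => pointwise_conv_inf c ε hc hε f hf q
  rwa [integral_const, probReal_univ, one_smul] at hDCT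

lemma mu_rep (n mm : ℕ) (hn : 1 ≤ n) (hmm : 1 ≤ mm) (ξ η θ σ : ℝ)
    (hσ : 0 < σ) (hξ : 0 < ξ) (hη : 0 < η) :
    Measure.map (fun p : ℝ × ℝ => σ⁻¹ * (ξ * η)⁻¹ * (hardF σ ξ η p - θ))
        (jointMeas n mm ξ θ σ)
      = Measure.map (hFun (θ / (σ * ξ * η)) ((Real.sqrt n * η)⁻¹))
          ((gaussianReal 0 1).prod (nuM mm)) := by
  haveI := nuM_prob mm hmm
  have hsn : (0:ℝ) < Real.sqrt n := Real.sqrt_pos.2 (by exact_mod_cast hn)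
  have hφ : Measurable (fun g : ℝ => θ + σ * ξ / Real.sqrt n * g) :=
    (measurable_id.const_mul _).const_add θ
  have hT : Measurable (fun p : ℝ × ℝ => σ⁻¹ * (ξ * η)⁻¹ * (hardF σ ξ η p - θ)) :=
    ((hardF_measurable σ ξ η).sub_const θ).const_mul _
  have hnu : (volume.withDensity fun s => ENNReal.ofReal (rho mm s)) = nuM mm := rfl
  rw [jointMeas, gauss_shift n hn σ ξ θ hσ hξ, hnu, ← Measure.map_id (μ := nuM mm),
    Measure.map_prod_map _ _ hφ measurable_id,
    Measure.map_map hT (hφ.prodMap measurable_id)]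
  rw [Measure.map_id]
  congr 1
  funext q
  have h := hard_comp σ ξ η θ hσ hξ hη hsn q.1 q.2
  simpa [Prod.map] using h

/-- consistent tuning, weak limits of the law of the scaled and centered
feasible hard-thresholding estimator when `n - k_n` is eventually constant equal to `m`. -/
theorem stmt_17 (ξ η : ℕ → ℝ) (hξ : ∀ n, 0 < ξ n) (hη : ∀ n, 0 < η n)
    (hxe : Tendsto (fun n : ℕ => ξ n * η n) atTop (nhds 0))
    (hne : Tendsto (fun n : ℕ => Real.sqrt n * η n) atTop atTop)
    (k : ℕ → ℕ) (hk : ∀ n, 2 ≤ n → 1 ≤ k n ∧ k n < n)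
    (m : ℕ) (hm : ∀ᶠ n in atTop, n - k n = m)
    (θ σ : ℕ → ℝ) (hσ : ∀ n, 0 < σ n)
    (ζ : EReal)
    (hζ : Tendsto (fun n : ℕ => ((θ n / (σ n * ξ n * η n) : ℝ) : EReal)) atTop (nhds ζ))
    (μ : ℕ → Measure ℝ)
    (hμ : ∀ n : ℕ, μ n =
      Measure.map
        (fun p : ℝ × ℝ => (σ n)⁻¹ * (ξ n * η n)⁻¹ * (hardF (σ n) (ξ n) (η n) p - θ n))
        (jointMeas n (n - k n) (ξ n) (θ n) (σ n))) :
    (∀ ζr : ℝ, ζ = (ζr : EReal) →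
        WeakConv μ
          (ENNReal.ofReal (∫ s in Ioi |ζr|, rho m s) • Measure.dirac (-ζr) +
            ENNReal.ofReal (1 - ∫ s in Ioi |ζr|, rho m s) • Measure.dirac 0)) ∧
    ((ζ = ⊤ ∨ ζ = ⊥) → WeakConv μ (Measure.dirac 0)) := by
  have hm1 : 1 ≤ m := by
    obtain ⟨n0, hn0, hn2⟩ := (hm.and (eventually_ge_atTop 2)).exists
    have := hk n0 hn2
    omega
  set c : ℕ → ℝ := fun n => θ n / (σ n * ξ n * η n) with hcdef
  set ε : ℕ → ℝ := fun n => (Real.sqrt n * η n)⁻¹ with hedef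
  have hε : Tendsto ε atTop (nhds 0) := hne.inv_tendsto_atTop
  have hev : ∀ f : ℝ → ℝ, Continuous f → ∀ᶠ n in atTop,
      ∫ x, f x ∂(μ n)
        = ∫ q, f (hFun (c n) (ε n) q) ∂((gaussianReal 0 1).prod (nuM m)) := by
    intro f hf
    filter_upwards [hm, eventually_ge_atTop 2] with n h1 h2
    have hn1 : 1 ≤ n := le_trans one_le_two h2
    rw [hμ n, h1, mu_rep n m hn1 hm1 (ξ n) (η n) (θ n) (σ n) (hσ n) (hξ n) (hη n),
      integral_map (hFun_measurable _ _).aemeasurable hf.aestronglyMeasurable]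
  constructor
  · rintro ζr rfl f hf ⟨C, hfC⟩
    have hc : Tendsto c atTop (nhds ζr) := EReal.tendsto_coe.mp hζ
    rw [target_int _ (rho_setInt_nonneg m _) (rho_Ioi_le_one m hm1 _) ζr f hf C hfC]
    exact (conv_real m hm1 c ε ζr hc hε f hf C hfC).congr'
      ((hev f hf).mono fun n h => h.symm)
  · rintro hinf f hf ⟨C, hfC⟩
    have hc : Tendsto (fun n => |c n|) atTop atTop := by
      rcases hinf with h | h
      · rw [h] at hζ
        have h1 : Tendsto c atTop atTop := by
          refine tendsto_atTop.2 fun b => ?_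
          exact (EReal.tendsto_nhds_top_iff_real.mp hζ b).mono fun n hb =>
            (EReal.coe_lt_coe_iff.1 hb).le
        exact tendsto_atTop_mono (fun n => le_abs_self _) h1
      · rw [h] at hζ
        have h1 : Tendsto (fun n => -c n) atTop atTop := by
          refine tendsto_atTop.2 fun b => ?_
          exact (EReal.tendsto_nhds_bot_iff_real.mp hζ (-b)).mono fun n hb => by
            have := (EReal.coe_lt_coe_iff.1 hb).le
            linarith
        exact tendsto_atTop_mono (fun n => neg_le_abs _) h1
    rw [integral_dirac]
    exact (conv_inf m hm1 c ε hc hε f hf C hfC).congr'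
      ((hev f hf).mono fun n h => h.symm)
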